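/- Let H be a hypergraph with edges of size 2 or 3, such that some vertex of H lies only in edges of size 2. Construct H' by adding a single new vertex v and replacing every edge e of size 2 by e ∪ {v}, with induced bijection φ : E(H) → E(H'). Then for any C ⊆ E(H), φ[C] is an edge-cover of H' if and only if C is an edge-cover of H; consequently H has a strongly minimal edge-cover if and only if H' does. -/
import Mathlib


/-- The map replacing each edge `e` of size `2` by `e ∪ {v}` for a single new vertex
`v` (modelled as `none : Option V`), leaving edges of size `3` unchanged. -/
def phi2 {V : Type*} [DecidableEq V] (e : Finset V) : Finset (Option V) :=
  if e.card = 2 then insert none (e.image some) else e.image some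

/-- `C` is an edge-cover of the hypergraph with vertex type `α` and edge set `E`. -/
def IsCover {α : Type*} (E C : Set (Finset α)) : Prop :=
  C ⊆ E ∧ ∀ v : α, ∃ e ∈ C, v ∈ e

/-- `C` is a strongly minimal edge-cover of the hypergraph with edge set `E`. -/
def StrMinCover {α : Type*} (E C : Set (Finset α)) : Prop :=
  IsCover E C ∧ ∀ D : Set (Finset α), IsCover E D →
    Cardinal.mk ↥(C \ D) ≤ Cardinal.mk ↥(D \ C)

/-- If every edge of `H` has size `2` or `3` and some vertex lies only in edges of
size `2`, then the induced map `φ` to the `3`-uniform hypergraph `H'` (obtained by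
adding a single new vertex to every `2`-edge) preserves edge-covers in both
directions; consequently `H` has a strongly minimal edge-cover iff `H'` does. -/
theorem stmt_12 {V : Type*} [DecidableEq V] (E : Set (Finset V))
    (hE : ∀ e ∈ E, e.card = 2 ∨ e.card = 3)
    (hw : ∃ w : V, ∀ e ∈ E, w ∈ e → e.card = 2) :
    (∀ e ∈ E, (phi2 e).card = 3) ∧
    (∀ C ⊆ E, (IsCover E C ↔ IsCover (phi2 '' E) (phi2 '' C))) ∧
    ((∃ C, StrMinCover E C) ↔ ∃ C', StrMinCover (phi2 '' E) C') := by
  obtain ⟨w, hwE⟩ := hw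
  have hsome : ∀ (v : V) (e : Finset V), some v ∈ phi2 e ↔ v ∈ e := by
    intro v e
    unfold phi2; split <;> simp
  have hnone : ∀ e : Finset V, e.card = 2 → (none : Option V) ∈ phi2 e := by
    intro e h2; simp [phi2, h2]
  have hinj : Function.Injective (phi2 (V := V)) := by
    intro a b h
    ext x
    rw [← hsome x a, h, hsome]
  have hcard : ∀ e ∈ E, (phi2 e).card = 3 := by
    intro e he
    have himg : (e.image some).card = e.card :=
      Finset.card_image_of_injective _ (Option.some_injective V)
    rcases hE e he with h2 | h3
    · have hnm : (none : Option V) ∉ e.image some := by simp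
      simp [phi2, h2, Finset.card_insert_of_notMem hnm, himg]
    · have : e.card ≠ 2 := by omega
      simp [phi2, this, himg, h3]
  have hcover : ∀ C ⊆ E, (IsCover E C ↔ IsCover (phi2 '' E) (phi2 '' C)) := by
    intro C hCE
    constructor
    · rintro ⟨hsub, hcov⟩
      refine ⟨Set.image_mono hsub, ?_⟩
      rintro (_ | v)
      · obtain ⟨e, heC, hwe⟩ := hcov w
        exact ⟨phi2 e, Set.mem_image_of_mem _ heC, hnone e (hwE e (hCE heC) hwe)⟩
      · obtain ⟨e, heC, hve⟩ := hcov v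
        exact ⟨phi2 e, Set.mem_image_of_mem _ heC, (hsome v e).2 hve⟩
    · rintro ⟨hsub, hcov⟩
      refine ⟨hCE, fun v => ?_⟩
      obtain ⟨e', he', hve'⟩ := hcov (some v)
      obtain ⟨e, heC, rfl⟩ := he'
      exact ⟨e, heC, (hsome v e).1 hve'⟩
  refine ⟨hcard, hcover, ?_⟩
  have hmk : ∀ s : Set (Finset V), Cardinal.mk ↥(phi2 '' s) = Cardinal.mk ↥s :=
    fun s => Cardinal.mk_image_eq hinj
  have hpre : ∀ D' : Set (Finset (Option V)), D' ⊆ phi2 '' E →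
      phi2 '' {e | e ∈ E ∧ phi2 e ∈ D'} = D' := by
    intro D' hD'
    ext x
    constructor
    · rintro ⟨e, ⟨-, he2⟩, rfl⟩; exact he2
    · intro hx
      obtain ⟨e, heE, rfl⟩ := hD' hx
      exact ⟨e, ⟨heE, hx⟩, rfl⟩
  constructor
  · rintro ⟨C, ⟨hCcov, hCmin⟩⟩
    refine ⟨phi2 '' C, (hcover C hCcov.1).1 hCcov, ?_⟩
    intro D' hD'
    set D : Set (Finset V) := {e | e ∈ E ∧ phi2 e ∈ D'} with hDdef
    have hDE : D ⊆ E := fun e he => he.1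
    have hDimg : phi2 '' D = D' := hpre D' hD'.1
    have hDcov : IsCover E D := (hcover D hDE).2 (hDimg ▸ hD')
    have := hCmin D hDcov
    rw [← hDimg, ← Set.image_diff hinj, ← Set.image_diff hinj, hmk, hmk]
    exact this
  · rintro ⟨C', ⟨hC'cov, hC'min⟩⟩
    set C : Set (Finset V) := {e | e ∈ E ∧ phi2 e ∈ C'} with hCdef
    have hCE : C ⊆ E := fun e he => he.1
    have hCimg : phi2 '' C = C' := hpre C' hC'cov.1
    refine ⟨C, (hcover C hCE).2 (hCimg ▸ hC'cov), ?_⟩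
    intro D hD
    have := hC'min (phi2 '' D) ((hcover D hD.1).1 hD)
    rw [← hCimg, ← Set.image_diff hinj, ← Set.image_diff hinj, hmk, hmk] at this
    exact this
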